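/- Let ⟨s, t⟩ be a superbubble in a DAG G with vertex set U. Then the induced subgraph on U has s as its unique vertex with no in-neighbours inside U and t as its unique vertex with no out-neighbours inside U (i.e., it is single-source with source s and single-sink with sink t). -/

import Mathlib

/-- `v` is reachable from `s` by a directed path whose internal vertices
(all vertices except the endpoints) avoid `avoid`. -/
def ReachWithout {V : Type*} (E : V → V → Prop) (avoid s v : V) : Prop :=
  s = v ∨ ∃ w, Relation.ReflTransGen (fun a b => E a b ∧ b ≠ avoid) s w ∧ E w v

/-- `t` is reachable from `v` by a directed path whose internal vertices avoid `avoid`. -/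
def CoReachWithout {V : Type*} (E : V → V → Prop) (avoid v t : V) : Prop :=
  v = t ∨ ∃ w, E v w ∧ Relation.ReflTransGen (fun a b => E a b ∧ a ≠ avoid) w t

/-- The subgraph induced by `U` is acyclic. -/
def AcyclicOn {V : Type*} (E : V → V → Prop) (U : Set V) : Prop :=
  ∀ v, ¬ Relation.TransGen (fun a b => E a b ∧ a ∈ U ∧ b ∈ U) v v

/-- The directed graph is acyclic. -/
def Acyclic {V : Type*} (E : V → V → Prop) : Prop :=
  ∀ v, ¬ Relation.TransGen E v v

/-- The reachability, matching and acyclicity conditions of a superbubble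
(Definition 1, without minimality). -/
def SBCore {V : Type*} (E : V → V → Prop) (s t : V) : Prop :=
  s ≠ t ∧ Relation.TransGen E s t ∧
  (∀ v, ReachWithout E t s v ↔ CoReachWithout E s v t) ∧
  AcyclicOn E {v | ReachWithout E t s v}

/-- `⟨s, t⟩` is a superbubble: reachability, matching, acyclicity and minimality. -/
def Superbubble {V : Type*} (E : V → V → Prop) (s t : V) : Prop :=
  SBCore E s t ∧ ∀ t', ReachWithout E t s t' → t' ≠ t → ¬ SBCore E s t'

/-- For a superbubble ⟨s, t⟩ with vertex set U in a DAG, the induced subgraph on U has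
s as its unique vertex without in-neighbours inside U, and t as its unique vertex
without out-neighbours inside U. -/
theorem superbubble_single_source_sink {V : Type*} (E : V → V → Prop)
    (hA : Acyclic E)
    (s t : V) (hSB : Superbubble E s t) :
    (∀ v, ReachWithout E t s v →
      ((∀ u, ReachWithout E t s u → ¬ E u v) ↔ v = s)) ∧
    (∀ v, ReachWithout E t s v →
      ((∀ u, ReachWithout E t s u → ¬ E v u) ↔ v = t)) := by

  obtain ⟨⟨hst, hreach, hmatch, hacyc⟩, hmin⟩ := hSB
  have hmono : ∀ {a b : V}, Relation.ReflTransGen (fun a b => E a b ∧ b ≠ t) a b →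
      Relation.ReflTransGen E a b := fun h => Relation.ReflTransGen.mono (r := fun a b => E a b ∧ b ≠ t) (p := E) (fun _ _ hh => hh.1) _ _ h
  have hmono' : ∀ {a b : V}, Relation.ReflTransGen (fun a b => E a b ∧ a ≠ s) a b →
      Relation.ReflTransGen E a b := fun h => Relation.ReflTransGen.mono (r := fun a b => E a b ∧ a ≠ s) (p := E) (fun _ _ hh => hh.1) _ _ h
  have hU : ∀ {v}, ReachWithout E t s v → v ≠ t →
      Relation.ReflTransGen (fun a b => E a b ∧ b ≠ t) s v := by
    rintro v (rfl | ⟨w, hw, he⟩) hv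
    · exact .refl
    · exact hw.tail ⟨he, hv⟩
  have rtg_reach : ∀ {w}, Relation.ReflTransGen (fun a b => E a b ∧ b ≠ t) s w →
      ReachWithout E t s w := by
    intro w hw
    rcases hw.cases_tail with rfl | ⟨c, hc, he⟩
    · exact Or.inl rfl
    · exact Or.inr ⟨c, hc, he.1⟩
  constructor
  · intro v hv
    constructor
    · intro hno
      by_contra hvs
      rcases hv with rfl | ⟨w, hw, he⟩
      · exact hvs rfl
      · exact hno w (rtg_reach hw) he
    · rintro hv' u hu heu
      subst v
      rcases eq_or_ne s u with rfl | hsu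
      · exact hA s (.single heu)
      · rcases hu with rfl | ⟨w, hw, he⟩
        · exact hsu rfl
        · exact hA s ((Relation.TransGen.tail' (hmono hw) he).tail heu)
  · intro v hv
    constructor
    · intro hno
      by_contra hvt
      rcases (hmatch v).1 hv with rfl | ⟨w, he, hw⟩
      · exact hvt rfl
      · exact hno w (Or.inr ⟨v, hU hv hvt, he⟩) he
    · rintro hv' u hu heu
      subst v
      rcases (hmatch u).1 hu with rfl | ⟨w, he, hw⟩
      · exact hA u (.single heu)
      · exact hA t (Relation.TransGen.head heu (Relation.TransGen.head' he (hmono' hw)))
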